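/- arXiv:2407.14547 — 2 statements merged into one kernel-verified Lean document; each statement's English description precedes it below -/
import Mathlib

section
/- The function x ↦ E(x) + √(1-x)·K(x) is strictly decreasing on (0,1), with limit π as x → 0⁺ and limit 1 as x → 1⁻. -/
set_option maxHeartbeats 1000000


open Real Set Filter

noncomputable def K (x : ℝ) : ℝ :=
  ∫ t in (0 : ℝ)..(π / 2), (1 - x * Real.sin t ^ 2) ^ (-(1/2) : ℝ)

noncomputable def E (x : ℝ) : ℝ :=
  ∫ t in (0 : ℝ)..(π / 2), (1 - x * Real.sin t ^ 2) ^ ((1/2) : ℝ)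

noncomputable def G (x t : ℝ) : ℝ :=
  Real.sqrt (1 - x * Real.sin t ^ 2) + Real.sqrt (1 - x) / Real.sqrt (1 - x * Real.sin t ^ 2)

lemma base_pos {x : ℝ} (hx0 : 0 ≤ x) (hx1 : x < 1) (t : ℝ) :
    0 < 1 - x * Real.sin t ^ 2 := by
  nlinarith [Real.sin_sq_le_one t, sq_nonneg (Real.sin t)]

lemma base_ge {x : ℝ} (hx0 : 0 ≤ x) (t : ℝ) :
    1 - x ≤ 1 - x * Real.sin t ^ 2 := by
  nlinarith [Real.sin_sq_le_one t]

lemma sqrt_base_cont (x : ℝ) :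
    Continuous (fun t => Real.sqrt (1 - x * Real.sin t ^ 2)) :=
  Real.continuous_sqrt.comp (by continuity)

lemma G_cont {x : ℝ} (hx0 : 0 ≤ x) (hx1 : x < 1) : Continuous (G x) := by
  have h : ∀ t, Real.sqrt (1 - x * Real.sin t ^ 2) ≠ 0 := fun t =>
    (Real.sqrt_pos.2 (base_pos hx0 hx1 t)).ne'
  exact (sqrt_base_cont x).add (continuous_const.div (sqrt_base_cont x) h)

lemma repr_eq {x : ℝ} (hx : x ∈ Ioo (0:ℝ) 1) :
    E x + Real.sqrt (1 - x) * K x = ∫ t in (0:ℝ)..(π/2), G x t := by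
  obtain ⟨hx0, hx1⟩ := hx
  have h : ∀ t, Real.sqrt (1 - x * Real.sin t ^ 2) ≠ 0 := fun t =>
    (Real.sqrt_pos.2 (base_pos hx0.le hx1 t)).ne'
  have hE : E x = ∫ t in (0:ℝ)..(π/2), Real.sqrt (1 - x * Real.sin t ^ 2) := by
    unfold E
    refine intervalIntegral.integral_congr fun t _ => ?_
    rw [← Real.sqrt_eq_rpow]
  have hK : K x = ∫ t in (0:ℝ)..(π/2), (Real.sqrt (1 - x * Real.sin t ^ 2))⁻¹ := by
    unfold K
    refine intervalIntegral.integral_congr fun t _ => ?_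
    rw [Real.rpow_neg (base_pos hx0.le hx1 t).le, ← Real.sqrt_eq_rpow]
  have hi1 : IntervalIntegrable (fun t => Real.sqrt (1 - x * Real.sin t ^ 2))
      MeasureTheory.volume 0 (π/2) := (sqrt_base_cont x).intervalIntegrable _ _
  have hi2 : IntervalIntegrable
      (fun t => Real.sqrt (1 - x) * (Real.sqrt (1 - x * Real.sin t ^ 2))⁻¹)
      MeasureTheory.volume 0 (π/2) :=
    (continuous_const.mul ((sqrt_base_cont x).inv₀ h)).intervalIntegrable _ _
  rw [hE, hK, ← intervalIntegral.integral_const_mul,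
    ← intervalIntegral.integral_add hi1 hi2]
  refine intervalIntegral.integral_congr fun t _ => ?_
  simp [G, div_eq_mul_inv]

lemma G_le_two {x : ℝ} (hx0 : 0 ≤ x) (hx1 : x < 1) (t : ℝ) : G x t ≤ 2 := by
  have h1 : Real.sqrt (1 - x * Real.sin t ^ 2) ≤ 1 := by
    exact Real.sqrt_le_one.2 (by nlinarith [sq_nonneg (Real.sin t)])
  have h2 : Real.sqrt (1 - x) / Real.sqrt (1 - x * Real.sin t ^ 2) ≤ 1 :=
    div_le_one_of_le₀ (Real.sqrt_le_sqrt (base_ge hx0 t)) (Real.sqrt_nonneg _)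
  have := add_le_add h1 h2
  simp only [G]
  linarith

lemma G_nonneg (x t : ℝ) : 0 ≤ G x t :=
  add_nonneg (Real.sqrt_nonneg _) (div_nonneg (Real.sqrt_nonneg _) (Real.sqrt_nonneg _))

lemma G_anti {x y : ℝ} (hx : x ∈ Ioo (0:ℝ) 1) (hy : y ∈ Ioo (0:ℝ) 1) (hxy : x < y) (t : ℝ) :
    G y t ≤ G x t := by
  obtain ⟨hx0, hx1⟩ := hx
  obtain ⟨hy0, hy1⟩ := hy
  have hu0 : (0:ℝ) ≤ Real.sin t ^ 2 := sq_nonneg _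
  have hu1 : Real.sin t ^ 2 ≤ 1 := Real.sin_sq_le_one t
  have hpx := base_pos hx0.le hx1 t
  have hpy := base_pos hy0.le hy1 t
  have h1 : Real.sqrt (1 - y * Real.sin t ^ 2) ≤ Real.sqrt (1 - x * Real.sin t ^ 2) :=
    Real.sqrt_le_sqrt (by nlinarith)
  have h2 : Real.sqrt (1 - y) / Real.sqrt (1 - y * Real.sin t ^ 2) ≤
      Real.sqrt (1 - x) / Real.sqrt (1 - x * Real.sin t ^ 2) := by
    rw [div_le_div_iff₀ (Real.sqrt_pos.2 hpy) (Real.sqrt_pos.2 hpx),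
      ← Real.sqrt_mul (by linarith), ← Real.sqrt_mul (by linarith)]
    exact Real.sqrt_le_sqrt (by nlinarith)
  exact add_le_add h1 h2

lemma G_zero_strict {x y : ℝ} (hx : x ∈ Ioo (0:ℝ) 1) (hy : y ∈ Ioo (0:ℝ) 1) (hxy : x < y) :
    G y 0 < G x 0 := by
  have : Real.sqrt (1 - y) < Real.sqrt (1 - x) :=
    Real.sqrt_lt_sqrt (by linarith [hy.2]) (by linarith)
  simpa [G] using this

theorem stmt4 :
    StrictAntiOn (fun x : ℝ => E x + Real.sqrt (1 - x) * K x) (Ioo 0 1) ∧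
    Tendsto (fun x : ℝ => E x + Real.sqrt (1 - x) * K x) (nhdsWithin 0 (Ioo 0 1)) (nhds π) ∧
    Tendsto (fun x : ℝ => E x + Real.sqrt (1 - x) * K x) (nhdsWithin 1 (Ioo 0 1)) (nhds 1) := by
  have hpi : (0:ℝ) < π / 2 := by positivity
  have heq : (fun x : ℝ => E x + Real.sqrt (1 - x) * K x) =ᶠ[nhdsWithin (0:ℝ) (Ioo 0 1)]
      fun x => ∫ t in (0:ℝ)..(π/2), G x t := by
    filter_upwards [self_mem_nhdsWithin] with x hx using repr_eq hx
  have heq1 : (fun x : ℝ => E x + Real.sqrt (1 - x) * K x) =ᶠ[nhdsWithin (1:ℝ) (Ioo 0 1)]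
      fun x => ∫ t in (0:ℝ)..(π/2), G x t := by
    filter_upwards [self_mem_nhdsWithin] with x hx using repr_eq hx
  have hmeas : ∀ {c : ℝ}, ∀ᶠ x in nhdsWithin c (Ioo (0:ℝ) 1),
      MeasureTheory.AEStronglyMeasurable (G x)
        (MeasureTheory.volume.restrict (Set.uIoc (0:ℝ) (π/2))) := by
    intro c
    filter_upwards [self_mem_nhdsWithin] with x hx
    exact (G_cont hx.1.le hx.2).aestronglyMeasurable
  have hbound : ∀ {c : ℝ}, ∀ᶠ x in nhdsWithin c (Ioo (0:ℝ) 1),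
      ∀ᵐ t ∂MeasureTheory.volume, t ∈ Set.uIoc (0:ℝ) (π/2) → ‖G x t‖ ≤ 2 := by
    intro c
    filter_upwards [self_mem_nhdsWithin] with x hx
    refine MeasureTheory.ae_of_all _ fun t _ => ?_
    rw [Real.norm_of_nonneg (G_nonneg x t)]
    exact G_le_two hx.1.le hx.2 t
  have hbi : IntervalIntegrable (fun _ : ℝ => (2:ℝ)) MeasureTheory.volume 0 (π/2) :=
    intervalIntegrable_const
  refine ⟨?_, ?_, ?_⟩
  · intro x hx y hy hxy
    show E y + Real.sqrt (1 - y) * K y < E x + Real.sqrt (1 - x) * K x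
    rw [repr_eq hx, repr_eq hy]
    refine intervalIntegral.integral_lt_integral_of_continuousOn_of_le_of_exists_lt hpi
      (G_cont hy.1.le hy.2).continuousOn (G_cont hx.1.le hx.2).continuousOn
      (fun t _ => G_anti hx hy hxy t) ⟨0, ⟨le_refl _, hpi.le⟩, G_zero_strict hx hy hxy⟩
  · refine Tendsto.congr' heq.symm ?_
    have h2 : (∫ _t in (0:ℝ)..(π/2), (2:ℝ)) = π := by
      rw [intervalIntegral.integral_const, smul_eq_mul]; ring
    have hT : Tendsto (fun x => ∫ t in (0:ℝ)..(π/2), G x t) (nhdsWithin (0:ℝ) (Ioo 0 1))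
        (nhds (∫ _t in (0:ℝ)..(π/2), (2:ℝ))) := by
      refine intervalIntegral.tendsto_integral_filter_of_dominated_convergence
        (fun _ => (2:ℝ)) hmeas hbound hbi ?_
      refine MeasureTheory.ae_of_all _ fun t _ => ?_
      have hc : ContinuousAt (fun x => G x t) 0 := by
        have hne : Real.sqrt (1 - (0:ℝ) * Real.sin t ^ 2) ≠ 0 := by simp
        exact ((Real.continuous_sqrt.comp (by continuity)).continuousAt).add
          (ContinuousAt.div ((Real.continuous_sqrt.comp (by continuity)).continuousAt)
            ((Real.continuous_sqrt.comp (by continuity)).continuousAt) hne)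
      have hval : G 0 t = 2 := by simp [G]; norm_num
      rw [← hval]
      exact hc.tendsto.mono_left nhdsWithin_le_nhds
    rwa [h2] at hT
  · refine Tendsto.congr' heq1.symm ?_
    have h1 : (∫ t in (0:ℝ)..(π/2), Real.cos t) = 1 := by
      simp
    have hT : Tendsto (fun x => ∫ t in (0:ℝ)..(π/2), G x t) (nhdsWithin (1:ℝ) (Ioo 0 1))
        (nhds (∫ t in (0:ℝ)..(π/2), Real.cos t)) := by
      refine intervalIntegral.tendsto_integral_filter_of_dominated_convergence
        (fun _ => (2:ℝ)) hmeas hbound hbi ?_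
      have hae : ∀ᵐ t : ℝ ∂MeasureTheory.volume, t ≠ π / 2 := by
        rw [MeasureTheory.ae_iff]
        simp only [ne_eq, not_not, Set.setOf_eq_eq_singleton]
        exact MeasureTheory.measure_singleton _
      filter_upwards [hae] with t ht htmem
      rw [Set.uIoc_of_le hpi.le] at htmem
      have htlt : t < π / 2 := lt_of_le_of_ne htmem.2 ht
      have hcos : 0 < Real.cos t := Real.cos_pos_of_mem_Ioo ⟨by linarith [htmem.1, hpi], htlt⟩
      have hsin : 1 - 1 * Real.sin t ^ 2 = Real.cos t ^ 2 := by
        have := Real.sin_sq_add_cos_sq t; linarith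
      have hne : Real.sqrt (1 - (1:ℝ) * Real.sin t ^ 2) ≠ 0 := by
        rw [hsin]
        positivity
      have hc : ContinuousAt (fun x => G x t) 1 := by
        exact ((Real.continuous_sqrt.comp (by continuity)).continuousAt).add
          (ContinuousAt.div ((Real.continuous_sqrt.comp (by continuity)).continuousAt)
            ((Real.continuous_sqrt.comp (by continuity)).continuousAt) hne)
      have hval : G 1 t = Real.cos t := by
        simp only [G, hsin, sub_self, Real.sqrt_zero, zero_div, add_zero,
          Real.sqrt_sq hcos.le]
      rw [← hval]
      exact hc.tendsto.mono_left nhdsWithin_le_nhds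
    rwa [h1] at hT
end

section
/- The function h_p(x) = (1-x)^p · K(x) is strictly decreasing on (0,1) if and only if p ≥ 1/4, and strictly increasing on (0,1) if and only if p ≤ 0. -/
open Real Set Filter Topology intervalIntegral MeasureTheory

lemma sig_pos {x t : ℝ} (hx : x < 1) : 0 < 1 - x * sin t ^ 2 := by
  rcases le_or_gt x 0 with h | h
  · nlinarith [sq_nonneg (sin t)]
  · nlinarith [sin_sq_le_one t]

lemma cont_rpow {x : ℝ} (hx : x < 1) (r : ℝ) :
    Continuous (fun t : ℝ => (1 - x * sin t ^ 2) ^ r) := by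
  apply Continuous.rpow_const (by continuity)
  exact fun t => Or.inl (ne_of_gt (sig_pos hx))

lemma hrw_pt {x : ℝ} (t : ℝ) (hx : x < 1) : (1 - x * sin t ^ 2) ^ (-(1/2) : ℝ)
    = (1 - x * sin t ^ 2) * (1 - x * sin t ^ 2) ^ (-(3/2) : ℝ) := by
  rw [← Real.rpow_one_add' (le_of_lt (sig_pos hx)) (by norm_num)]
  norm_num

noncomputable def Kd (x : ℝ) : ℝ :=
  ∫ t in (0 : ℝ)..(π / 2), sin t ^ 2 / 2 * (1 - x * sin t ^ 2) ^ (-(3/2) : ℝ)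

noncomputable def I (x : ℝ) : ℝ :=
  ∫ t in (0 : ℝ)..(π / 2), cos t ^ 2 * (1 - x * sin t ^ 2) ^ (-(1/2) : ℝ)

lemma K_pos {x : ℝ} (hx : x < 1) : 0 < K x := by
  apply intervalIntegral_pos_of_pos (f := fun t : ℝ => (1 - x * sin t ^ 2) ^ (-(1/2) : ℝ))
  · exact ((cont_rpow hx _).intervalIntegrable _ _)
  · exact fun t => Real.rpow_pos_of_pos (sig_pos hx) _
  · positivity

lemma Kd_pos {x : ℝ} (hx : x < 1) : 0 < Kd x := by
  apply intervalIntegral_pos_of_pos_on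
    (f := fun t : ℝ => sin t ^ 2 / 2 * (1 - x * sin t ^ 2) ^ (-(3/2) : ℝ))
  · exact (Continuous.mul (by continuity) (cont_rpow hx _)).intervalIntegrable _ _
  · intro t ht
    have hs : 0 < sin t := sin_pos_of_pos_of_lt_pi ht.1 (by linarith [ht.2, pi_pos])
    have := Real.rpow_pos_of_pos (sig_pos (t := t) hx) (-(3/2) : ℝ)
    positivity
  · positivity

lemma hasDerivAt_inner {y : ℝ} (hy : y < 1) (t : ℝ) :
    HasDerivAt (fun z : ℝ => (1 - z * sin t ^ 2) ^ (-(1/2) : ℝ))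
      (sin t ^ 2 / 2 * (1 - y * sin t ^ 2) ^ (-(3/2) : ℝ)) y := by
  have h1 : HasDerivAt (fun z : ℝ => 1 - z * sin t ^ 2) (-(sin t ^ 2)) y := by
    simpa using ((hasDerivAt_id y).mul_const (sin t ^ 2)).const_sub 1
  have h2 := h1.rpow_const (p := (-(1/2) : ℝ)) (Or.inl (ne_of_gt (sig_pos hy)))
  convert h2 using 1
  rw [show (-(1/2) : ℝ) - 1 = -(3/2) by norm_num]
  ring

lemma hasDerivAt_K {x : ℝ} (hx : x ∈ Ioo (0:ℝ) 1) : HasDerivAt K (Kd x) x := by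
  obtain ⟨hx0, hx1⟩ := hx
  set ε := (1 - x) / 2 with hε
  have hεpos : 0 < ε := by rw [hε]; linarith
  have key : ∀ y ∈ Metric.ball x ε, ∀ t : ℝ, (1 - x) / 2 ≤ 1 - y * sin t ^ 2 := by
    intro y hy t
    have : |y - x| < ε := by simpa [Real.dist_eq] using hy
    have h1 : y < (1 + x) / 2 := by
      have := abs_lt.mp this
      linarith [this.2]
    rcases le_or_gt y 0 with h | h
    · nlinarith [sq_nonneg (sin t)]
    · nlinarith [sin_sq_le_one t, sq_nonneg (sin t)]
  have := hasDerivAt_integral_of_dominated_loc_of_deriv_le (μ := volume)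
      (F := fun (y : ℝ) (t : ℝ) => (1 - y * sin t ^ 2) ^ (-(1/2) : ℝ))
      (F' := fun (y : ℝ) (t : ℝ) => sin t ^ 2 / 2 * (1 - y * sin t ^ 2) ^ (-(3/2) : ℝ))
      (x₀ := x) (a := 0) (b := π / 2)
      (bound := fun _ => 1 / 2 * ((1 - x) / 2) ^ (-(3/2) : ℝ)) (Metric.ball_mem_nhds x hεpos)
      ?_ ?_ ?_ ?_ ?_ ?_
  · exact this.2
  · filter_upwards [Metric.ball_mem_nhds x hεpos] with y hy
    have hy1 : y < 1 := by
      have := key y hy (π/2)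
      rw [Real.sin_pi_div_two] at this
      nlinarith
    exact (Continuous.aestronglyMeasurable (by
      apply Continuous.rpow_const (by continuity)
      exact fun t => Or.inl (ne_of_gt (sig_pos hy1)))).restrict
  · exact (cont_rpow hx1 _).intervalIntegrable _ _
  · exact ((Continuous.mul (by continuity) (cont_rpow hx1 _)).aestronglyMeasurable).restrict
  · filter_upwards with t _ y hy
    have hs := key y hy t
    have hy1 : y < 1 := by
      have := key y hy (π/2)
      rw [Real.sin_pi_div_two] at this
      nlinarith
    have hσ : (0:ℝ) < 1 - y * sin t ^ 2 := sig_pos hy1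
    rw [Real.norm_eq_abs, abs_mul, abs_of_nonneg (by positivity : (0:ℝ) ≤ sin t ^ 2 / 2),
      abs_of_pos (Real.rpow_pos_of_pos hσ _)]
    have h1 : (1 - y * sin t ^ 2) ^ (-(3/2) : ℝ) ≤ ((1 - x) / 2) ^ (-(3/2) : ℝ) :=
      Real.rpow_le_rpow_of_nonpos (by positivity) hs (by norm_num)
    have h2 : sin t ^ 2 / 2 ≤ 1 / 2 := by nlinarith [sin_sq_le_one t]
    have h3 : (0:ℝ) < (1 - y * sin t ^ 2) ^ (-(3/2) : ℝ) := Real.rpow_pos_of_pos hσ _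
    nlinarith [sq_nonneg (sin t), Real.rpow_pos_of_pos (show (0:ℝ) < (1-x)/2 by positivity) (-(3/2) : ℝ)]
  · exact intervalIntegrable_const
  · filter_upwards with t _ y hy
    have hy1 : y < 1 := by
      have := key y hy (π/2)
      rw [Real.sin_pi_div_two] at this
      nlinarith
    exact hasDerivAt_inner hy1 t

lemma ibp {x : ℝ} (hx : x ∈ Ioo (0:ℝ) 1) :
    ∫ t in (0:ℝ)..(π/2), (1 - 2 * sin t ^ 2 + x * sin t ^ 2 * sin t ^ 2) *
      (1 - x * sin t ^ 2) ^ (-(3/2) : ℝ) = 0 := by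
  obtain ⟨_, hx1⟩ := hx
  have key : ∀ t ∈ uIcc (0:ℝ) (π/2),
      HasDerivAt (fun t => sin t * cos t * (1 - x * sin t ^ 2) ^ (-(1/2) : ℝ))
      ((1 - 2 * sin t ^ 2 + x * sin t ^ 2 * sin t ^ 2) * (1 - x * sin t ^ 2) ^ (-(3/2) : ℝ)) t := by
    intro t _
    have hσ : 0 < 1 - x * sin t ^ 2 := sig_pos hx1
    have d1 : HasDerivAt (fun t : ℝ => sin t * cos t) (cos t * cos t + sin t * -sin t) t :=
      (Real.hasDerivAt_sin t).mul (Real.hasDerivAt_cos t)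
    have d2inner : HasDerivAt (fun t : ℝ => 1 - x * sin t ^ 2)
        (-(x * (2 * sin t ^ 1 * cos t))) t :=
      (((Real.hasDerivAt_sin t).pow 2).const_mul x).const_sub 1
    have d2 := d2inner.rpow_const (p := (-(1/2):ℝ)) (Or.inl (ne_of_gt hσ))
    have d3 := d1.mul d2
    refine d3.congr_deriv ?_
    have hrw : (1 - x * sin t ^ 2) ^ (-(1/2) : ℝ)
        = (1 - x * sin t ^ 2) * (1 - x * sin t ^ 2) ^ (-(3/2) : ℝ) := by
      rw [← Real.rpow_one_add' (le_of_lt hσ) (by norm_num)]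
      norm_num
    rw [show (-(1/2) : ℝ) - 1 = -(3/2) by norm_num, hrw]
    have hc : cos t ^ 2 = 1 - sin t ^ 2 := by
      nlinarith [sin_sq_add_cos_sq t]
    ring_nf
    rw [hc]
    ring
  have hint : IntervalIntegrable (fun t => (1 - 2 * sin t ^ 2 + x * sin t ^ 2 * sin t ^ 2) *
      (1 - x * sin t ^ 2) ^ (-(3/2) : ℝ)) volume 0 (π/2) :=
    (Continuous.mul (by continuity) (cont_rpow hx1 _)).intervalIntegrable _ _
  rw [integral_eq_sub_of_hasDerivAt key hint]
  simp [Real.cos_pi_div_two]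

lemma key3 {x : ℝ} (hx : x ∈ Ioo (0:ℝ) 1) : (1 - x) * Kd x = 1/2 * I x := by
  obtain ⟨hx0, hx1⟩ := hx
  have h0 := ibp ⟨hx0, hx1⟩
  have i1 : IntervalIntegrable (fun t : ℝ => sin t ^ 2 / 2 * (1 - x * sin t ^ 2) ^ (-(3/2) : ℝ))
      volume 0 (π/2) := (Continuous.mul (by continuity) (cont_rpow hx1 _)).intervalIntegrable _ _
  have i2 : IntervalIntegrable (fun t : ℝ => cos t ^ 2 * (1 - x * sin t ^ 2) ^ (-(1/2) : ℝ))
      volume 0 (π/2) := (Continuous.mul (by continuity) (cont_rpow hx1 _)).intervalIntegrable _ _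
  have comb : (∫ t in (0:ℝ)..(π/2),
        ((1 - x) * (sin t ^ 2 / 2 * (1 - x * sin t ^ 2) ^ (-(3/2) : ℝ))
          - 1/2 * (cos t ^ 2 * (1 - x * sin t ^ 2) ^ (-(1/2) : ℝ))))
      = ∫ t in (0:ℝ)..(π/2), (-(1/2)) * ((1 - 2 * sin t ^ 2 + x * sin t ^ 2 * sin t ^ 2) *
          (1 - x * sin t ^ 2) ^ (-(3/2) : ℝ)) := by
    apply integral_congr
    intro t _
    dsimp only
    have hc : cos t ^ 2 = 1 - sin t ^ 2 := by nlinarith [sin_sq_add_cos_sq t]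
    rw [hrw_pt t hx1, hc]
    ring
  rw [integral_sub (i1.const_mul _) (i2.const_mul _), intervalIntegral.integral_const_mul, intervalIntegral.integral_const_mul,
    intervalIntegral.integral_const_mul, h0] at comb
  have : (1 - x) * Kd x - 1/2 * I x = 0 := by
    simpa [Kd, I] using comb
  linarith

lemma key4 {x : ℝ} (hx : x ∈ Ioo (0:ℝ) 1) : (1 - x) * Kd x < 1/4 * K x := by
  obtain ⟨hx0, hx1⟩ := hx
  have h0 := ibp ⟨hx0, hx1⟩
  have i1 : IntervalIntegrable (fun t : ℝ => sin t ^ 2 / 2 * (1 - x * sin t ^ 2) ^ (-(3/2) : ℝ))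
      volume 0 (π/2) := (Continuous.mul (by continuity) (cont_rpow hx1 _)).intervalIntegrable _ _
  have i2 : IntervalIntegrable (fun t : ℝ => (1 - x * sin t ^ 2) ^ (-(1/2) : ℝ))
      volume 0 (π/2) := (cont_rpow hx1 _).intervalIntegrable _ _
  have J_pos : 0 < ∫ t in (0:ℝ)..(π/2),
      sin t ^ 2 * (1 - sin t ^ 2) * (1 - x * sin t ^ 2) ^ (-(3/2) : ℝ) := by
    apply intervalIntegral_pos_of_pos_on
    · exact (Continuous.mul (by continuity) (cont_rpow hx1 _)).intervalIntegrable _ _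
    · intro t ht
      have hs : 0 < sin t := sin_pos_of_pos_of_lt_pi ht.1 (by linarith [ht.2, pi_pos])
      have hc : 0 < cos t := cos_pos_of_mem_Ioo ⟨by linarith [ht.1, pi_pos], ht.2⟩
      have hc2 : cos t ^ 2 = 1 - sin t ^ 2 := by nlinarith [sin_sq_add_cos_sq t]
      have := Real.rpow_pos_of_pos (sig_pos (t := t) hx1) (-(3/2) : ℝ)
      have h1 : 0 < 1 - sin t ^ 2 := by rw [← hc2]; positivity
      positivity
    · positivity
  have comb : (∫ t in (0:ℝ)..(π/2),
        ((1 - x) * (sin t ^ 2 / 2 * (1 - x * sin t ^ 2) ^ (-(3/2) : ℝ))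
          - 1/4 * ((1 - x * sin t ^ 2) ^ (-(1/2) : ℝ))
          + 1/4 * ((1 - 2 * sin t ^ 2 + x * sin t ^ 2 * sin t ^ 2) *
            (1 - x * sin t ^ 2) ^ (-(3/2) : ℝ))))
      = ∫ t in (0:ℝ)..(π/2), (-(x/4)) * (sin t ^ 2 * (1 - sin t ^ 2) *
          (1 - x * sin t ^ 2) ^ (-(3/2) : ℝ)) := by
    apply integral_congr
    intro t _
    dsimp only
    rw [hrw_pt t hx1]
    ring
  have i3 : IntervalIntegrable (fun t : ℝ => (1 - 2 * sin t ^ 2 + x * sin t ^ 2 * sin t ^ 2) *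
      (1 - x * sin t ^ 2) ^ (-(3/2) : ℝ)) volume 0 (π/2) :=
    (Continuous.mul (by continuity) (cont_rpow hx1 _)).intervalIntegrable _ _
  rw [integral_add ((i1.const_mul _).sub (i2.const_mul _)) (i3.const_mul _),
    integral_sub (i1.const_mul _) (i2.const_mul _), intervalIntegral.integral_const_mul, intervalIntegral.integral_const_mul,
    intervalIntegral.integral_const_mul, intervalIntegral.integral_const_mul, h0] at comb
  have hK : (∫ t in (0:ℝ)..(π/2), (1 - x * sin t ^ 2) ^ (-(1/2) : ℝ)) = K x := rfl
  have hKd : (∫ t in (0:ℝ)..(π/2), sin t ^ 2 / 2 * (1 - x * sin t ^ 2) ^ (-(3/2) : ℝ)) = Kd x := rfl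
  rw [hK, hKd] at comb
  nlinarith

lemma rpow_half_inv_sqrt {σ : ℝ} (hσ : 0 < σ) : σ ^ (-(1/2) : ℝ) = (Real.sqrt σ)⁻¹ := by
  rw [Real.rpow_neg hσ.le, Real.sqrt_eq_rpow]

lemma I_le_one {x : ℝ} (hx : x ∈ Ioo (0:ℝ) 1) : I x ≤ 1 := by
  obtain ⟨hx0, hx1⟩ := hx
  have h1 : I x ≤ ∫ t in (0:ℝ)..(π/2), cos t := by
    apply integral_mono_on (by positivity)
      ((Continuous.mul (by continuity) (cont_rpow hx1 _)).intervalIntegrable _ _)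
      (Real.continuous_cos.intervalIntegrable _ _)
    intro t ht
    have hc : 0 ≤ cos t := cos_nonneg_of_mem_Icc ⟨by linarith [ht.1, pi_pos], ht.2⟩
    have hσ : 0 < 1 - x * sin t ^ 2 := sig_pos hx1
    have h2 : cos t ^ 2 ≤ 1 - x * sin t ^ 2 := by
      nlinarith [sin_sq_add_cos_sq t, sq_nonneg (sin t)]
    have h3 : cos t ≤ Real.sqrt (1 - x * sin t ^ 2) := by
      rw [show cos t = Real.sqrt (cos t ^ 2) by rw [Real.sqrt_sq hc]]
      exact Real.sqrt_le_sqrt h2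
    simp only [Pi.mul_apply]
    rw [rpow_half_inv_sqrt hσ]
    have hs : 0 < Real.sqrt (1 - x * sin t ^ 2) := Real.sqrt_pos.mpr hσ
    calc cos t ^ 2 * (Real.sqrt (1 - x * sin t ^ 2))⁻¹
        ≤ (Real.sqrt (1 - x * sin t ^ 2)) * cos t * (Real.sqrt (1 - x * sin t ^ 2))⁻¹ := by
          apply mul_le_mul_of_nonneg_right _ (by positivity)
          nlinarith
      _ = cos t := by field_simp
  rw [integral_cos] at h1
  simpa using h1

lemma I_ge {x : ℝ} (hx : x ∈ Ioo (0:ℝ) 1) : π/4 ≤ I x := by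
  obtain ⟨hx0, hx1⟩ := hx
  have h1 : (∫ t in (0:ℝ)..(π/2), cos t ^ 2) ≤ I x := by
    apply integral_mono_on (by positivity)
      ((Real.continuous_cos.pow 2).intervalIntegrable _ _)
      ((Continuous.mul (by continuity) (cont_rpow hx1 _)).intervalIntegrable _ _)
    intro t ht
    have hσ : 0 < 1 - x * sin t ^ 2 := sig_pos hx1
    have h2 : (1:ℝ) ≤ (1 - x * sin t ^ 2) ^ (-(1/2) : ℝ) := by
      have := Real.rpow_le_rpow_of_nonpos hσ
        (by nlinarith [sq_nonneg (sin t)] : 1 - x * sin t ^ 2 ≤ 1) (by norm_num : (-(1/2):ℝ) ≤ 0)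
      simpa using this
    simp only [Pi.mul_apply, Pi.pow_apply]
    nlinarith [sq_nonneg (cos t)]
  rw [integral_cos_sq] at h1
  simp [Real.cos_pi_div_two] at h1
  linarith

lemma K_le {x : ℝ} (hx : x ∈ Ioo (0:ℝ) 1) : K x ≤ π/2 * (1 - x) ^ (-(1/2) : ℝ) := by
  obtain ⟨hx0, hx1⟩ := hx
  have h1 : K x ≤ ∫ _t in (0:ℝ)..(π/2), (1 - x) ^ (-(1/2) : ℝ) := by
    apply integral_mono_on (by positivity)
      ((cont_rpow hx1 _).intervalIntegrable _ _) (intervalIntegrable_const)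
    intro t _
    exact Real.rpow_le_rpow_of_nonpos (by linarith)
      (by nlinarith [mul_le_mul_of_nonneg_left (sin_sq_le_one t) hx0.le]) (by norm_num)
  rw [intervalIntegral.integral_const, smul_eq_mul] at h1
  linarith

lemma K_ge_log {x : ℝ} (hx : x ∈ Ioo (0:ℝ) 1) : -Real.log (Real.sqrt (1 - x)) ≤ K x := by
  obtain ⟨hx0, hx1⟩ := hx
  set c := Real.sqrt (1 - x) with hc
  have hc0 : 0 < c := Real.sqrt_pos.mpr (by linarith)
  have hc1 : c < 1 := by
    nlinarith [Real.sq_sqrt (show (0:ℝ) ≤ 1 - x by linarith), Real.sqrt_nonneg (1 - x)]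
  have hder : ∀ t ∈ uIcc (0:ℝ) (π/2), HasDerivAt (fun t : ℝ => -Real.log (c + π/2 - t))
      ((c + π/2 - t)⁻¹) t := by
    intro t ht
    rw [uIcc_of_le (by positivity)] at ht
    have hpos : 0 < c + π/2 - t := by
      have := ht.2
      linarith
    have d1 : HasDerivAt (fun t : ℝ => c + π/2 - t) (-1) t := by
      simpa using (hasDerivAt_id t).const_sub (c + π/2)
    have d2 := (d1.log (ne_of_gt hpos)).neg
    refine d2.congr_deriv ?_
    ring
  have hint : IntervalIntegrable (fun t : ℝ => (c + π/2 - t)⁻¹) volume 0 (π/2) := by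
    apply ContinuousOn.intervalIntegrable
    apply ContinuousOn.inv₀ (by fun_prop)
    intro t ht
    rw [uIcc_of_le (by positivity)] at ht
    have := ht.2
    have : 0 < c + π/2 - t := by linarith
    exact ne_of_gt this
  have heval : (∫ t in (0:ℝ)..(π/2), (c + π/2 - t)⁻¹)
      = -Real.log c + Real.log (c + π/2) := by
    rw [integral_eq_sub_of_hasDerivAt hder hint]
    ring_nf
  have hmono : (∫ t in (0:ℝ)..(π/2), (c + π/2 - t)⁻¹) ≤ K x := by
    apply integral_mono_on (by positivity) hint ((cont_rpow hx1 _).intervalIntegrable _ _)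
    intro t ht
    have hσ : 0 < 1 - x * sin t ^ 2 := sig_pos hx1
    have hcos : 0 ≤ cos t := cos_nonneg_of_mem_Icc ⟨by linarith [ht.1, pi_pos], ht.2⟩
    have h2 : 1 - x * sin t ^ 2 ≤ (c + cos t) ^ 2 := by
      have hsq : c ^ 2 = 1 - x := Real.sq_sqrt (by linarith)
      nlinarith [sin_sq_add_cos_sq t, sq_nonneg (sin t), sq_nonneg (cos t)]
    have h3 : Real.sqrt (1 - x * sin t ^ 2) ≤ c + cos t := by
      calc Real.sqrt (1 - x * sin t ^ 2) ≤ Real.sqrt ((c + cos t) ^ 2) := Real.sqrt_le_sqrt h2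
        _ = c + cos t := Real.sqrt_sq (by positivity)
    have h4 : cos t ≤ π/2 - t := by
      have := Real.sin_le (show 0 ≤ π/2 - t by linarith [ht.2])
      rwa [Real.sin_pi_div_two_sub] at this
    have h5 : Real.sqrt (1 - x * sin t ^ 2) ≤ c + π/2 - t := by linarith
    rw [rpow_half_inv_sqrt hσ]
    exact inv_anti₀ (Real.sqrt_pos.mpr hσ) h5
  have hlog : 0 ≤ Real.log (c + π/2) := Real.log_nonneg (by nlinarith [pi_gt_three])
  linarith [heval ▸ hmono]

lemma hasDerivAt_h (p : ℝ) {x : ℝ} (hx : x ∈ Ioo (0:ℝ) 1) :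
    HasDerivAt (fun x : ℝ => (1 - x) ^ p * K x)
      ((1 - x) ^ (p - 1) * ((1 - x) * Kd x - p * K x)) x := by
  obtain ⟨hx0, hx1⟩ := hx
  have h1x : (0:ℝ) < 1 - x := by linarith
  have d1 : HasDerivAt (fun x : ℝ => 1 - x) (-1) x := by
    simpa using (hasDerivAt_id x).const_sub 1
  have d2 := d1.rpow_const (p := p) (Or.inl (ne_of_gt h1x))
  have d3 := d2.mul (hasDerivAt_K ⟨hx0, hx1⟩)
  refine d3.congr_deriv ?_
  have hsplit : (1 - x) ^ p = (1 - x) ^ (p - 1) * (1 - x) := by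
    rw [← Real.rpow_add_one (ne_of_gt h1x) (p - 1)]
    norm_num
  rw [hsplit]
  ring

lemma exists_slope_pos {f : ℝ → ℝ} {x d : ℝ} (hx : x ∈ Ioo (0:ℝ) 1)
    (hf : HasDerivAt f d x) (hd : 0 < d) :
    ∃ y ∈ Ioo (0:ℝ) 1, x < y ∧ f x < f y := by
  have h1 := hasDerivAt_iff_tendsto_slope.mp hf
  have h2 : ∀ᶠ y in 𝓝[>] x, 0 < slope f x y := by
    apply Eventually.filter_mono (nhdsWithin_mono x (fun y (hy : y ∈ Ioi x) => (mem_Ioi.mp hy).ne'))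
    exact h1.eventually (eventually_gt_nhds hd)
  have h3 : ∀ᶠ y in 𝓝[>] x, y ∈ Ioo (0:ℝ) 1 :=
    eventually_of_mem (mem_nhdsWithin_of_mem_nhds (isOpen_Ioo.mem_nhds hx)) (fun y hy => hy)
  have h4 : ∀ᶠ y in 𝓝[>] x, y ∈ Ioi x :=
    eventually_of_mem self_mem_nhdsWithin (fun y hy => hy)
  obtain ⟨y, hs, hmem, hgt⟩ := (h2.and (h3.and h4)).exists
  refine ⟨y, hmem, hgt, ?_⟩
  have hxy : (0:ℝ) < y - x := sub_pos.mpr hgt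
  rw [slope_def_field, div_pos_iff] at hs
  rcases hs with ⟨h, _⟩ | ⟨_, h⟩ <;> linarith

lemma exists_slope_neg {f : ℝ → ℝ} {x d : ℝ} (hx : x ∈ Ioo (0:ℝ) 1)
    (hf : HasDerivAt f d x) (hd : d < 0) :
    ∃ y ∈ Ioo (0:ℝ) 1, x < y ∧ f y < f x := by
  have h1 := hasDerivAt_iff_tendsto_slope.mp hf
  have h2 : ∀ᶠ y in 𝓝[>] x, slope f x y < 0 := by
    apply Eventually.filter_mono (nhdsWithin_mono x (fun y (hy : y ∈ Ioi x) => (mem_Ioi.mp hy).ne'))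
    exact h1.eventually (eventually_lt_nhds hd)
  have h3 : ∀ᶠ y in 𝓝[>] x, y ∈ Ioo (0:ℝ) 1 :=
    eventually_of_mem (mem_nhdsWithin_of_mem_nhds (isOpen_Ioo.mem_nhds hx)) (fun y hy => hy)
  have h4 : ∀ᶠ y in 𝓝[>] x, y ∈ Ioi x :=
    eventually_of_mem self_mem_nhdsWithin (fun y hy => hy)
  obtain ⟨y, hs, hmem, hgt⟩ := (h2.and (h3.and h4)).exists
  refine ⟨y, hmem, hgt, ?_⟩
  have hxy : (0:ℝ) < y - x := sub_pos.mpr hgt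
  rw [slope_def_field, div_neg_iff] at hs
  rcases hs with ⟨h, h'⟩ | ⟨h, _⟩ <;> linarith

theorem stmt15 (p : ℝ) :
    (StrictAntiOn (fun x : ℝ => (1 - x) ^ p * K x) (Ioo 0 1) ↔ p ≥ 1/4) ∧
    (StrictMonoOn (fun x : ℝ => (1 - x) ^ p * K x) (Ioo 0 1) ↔ p ≤ 0) := by
  constructor
  · constructor
    · -- StrictAntiOn → p ≥ 1/4
      intro hA
      by_contra hp
      push_neg at hp
      -- find x with positive derivative
      have main : ∃ x ∈ Ioo (0:ℝ) 1,
          0 < (1 - x) ^ (p - 1) * ((1 - x) * Kd x - p * K x) := by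
        rcases le_or_gt p 0 with h0 | h0
        · refine ⟨1/2, by norm_num, ?_⟩
          have hm : ((1:ℝ)/2) ∈ Ioo (0:ℝ) 1 := by norm_num
          have h1 := key3 hm
          have h2 := I_ge hm
          have h3 := K_pos (show (1:ℝ)/2 < 1 by norm_num)
          have h4 : p * K (1/2) ≤ 0 := mul_nonpos_of_nonpos_of_nonneg h0 h3.le
          have h5 : (0:ℝ) < (1 - 1/2 : ℝ) ^ (p - 1) := Real.rpow_pos_of_pos (by norm_num) _
          have h6 : (0:ℝ) < (1 - 1/2) * Kd (1/2) := by
            rw [h1]; linarith [pi_pos]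
          exact mul_pos h5 (by linarith)
        · set m := (4 * p + 1) / 2 with hm
          have hm1 : m < 1 := by rw [hm]; linarith
          have hm0 : 0 < m := by rw [hm]; linarith
          set x := 1 - m ^ 2 with hxdef
          have hxI : x ∈ Ioo (0:ℝ) 1 := by
            constructor
            · rw [hxdef]; nlinarith
            · rw [hxdef]; nlinarith
          clear_value m
          clear_value x
          refine ⟨x, hxI, ?_⟩
          have h1 := key3 hxI
          have h2 := I_ge hxI
          have h3 := K_le hxI
          have h1x : (1:ℝ) - x = m ^ 2 := by rw [hxdef]; ring
          have hrp : ((1:ℝ) - x) ^ (-(1/2) : ℝ) = m⁻¹ := by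
            rw [h1x, ← Real.rpow_natCast m 2, ← Real.rpow_mul hm0.le,
              show ((2:ℕ):ℝ) * (-(1/2):ℝ) = -1 by norm_num, Real.rpow_neg_one]
          have h4 : p * K x ≤ p * (π/2 * m⁻¹) := by
            apply mul_le_mul_of_nonneg_left _ h0.le
            rw [hrp] at h3; exact h3
          have h5 : p * (π/2 * m⁻¹) < π/8 := by
            have hne : m ≠ 0 := ne_of_gt hm0
            rw [show p * (π / 2 * m⁻¹) = p * π / (2 * m) by field_simp,
              div_lt_div_iff₀ (by positivity) (by norm_num)]
            nlinarith [pi_pos, mul_pos pi_pos (show (0:ℝ) < 2 * m - 8 * p by rw [hm]; linarith)]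
          have h6 : π/8 ≤ (1 - x) * Kd x := by rw [h1]; linarith
          have h7 : (0:ℝ) < (1 - x) ^ (p - 1) := Real.rpow_pos_of_pos (by nlinarith) _
          exact mul_pos h7 (by linarith)
      obtain ⟨x, hxI, hpos⟩ := main
      obtain ⟨y, hyI, hxy, hlt⟩ := exists_slope_pos hxI (hasDerivAt_h p hxI) hpos
      have h := hA hxI hyI hxy
      dsimp only at h
      linarith
    · -- p ≥ 1/4 → StrictAntiOn
      intro hp
      apply strictAntiOn_of_deriv_neg (convex_Ioo 0 1)
      · intro x hx
        exact (hasDerivAt_h p hx).continuousAt.continuousWithinAt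
      · intro x hx
        rw [interior_Ioo] at hx
        rw [(hasDerivAt_h p hx).deriv]
        have h1 := key4 hx
        have h2 := K_pos hx.2
        have h3 : (0:ℝ) < (1 - x) ^ (p - 1) := Real.rpow_pos_of_pos (by linarith [hx.2]) _
        have h4 : (1 - x) * Kd x - p * K x < 0 := by nlinarith
        exact mul_neg_of_pos_of_neg h3 h4
  · constructor
    · -- StrictMonoOn → p ≤ 0
      intro hM
      by_contra hp
      push_neg at hp
      set c := Real.exp (-(1/p)) with hc
      have hc0 : 0 < c := Real.exp_pos _
      have hc1 : c < 1 := by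
        rw [hc, Real.exp_lt_one_iff]
        have : 0 < 1/p := by positivity
        linarith
      clear_value c
      set x := 1 - c ^ 2 with hxdef
      have hxI : x ∈ Ioo (0:ℝ) 1 := by
        constructor
        · rw [hxdef]; nlinarith
        · rw [hxdef]; nlinarith
      have h1x : (1:ℝ) - x = c ^ 2 := by rw [hxdef]; ring
      clear_value x
      have hKge := K_ge_log hxI
      have hsq : Real.sqrt (1 - x) = c := by rw [h1x, Real.sqrt_sq hc0.le]
      rw [hsq, hc, Real.log_exp] at hKge
      have hKge' : 1/p ≤ K x := by linarith
      have h1 := key3 hxI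
      have h2 := I_le_one hxI
      have hneg : (1 - x) ^ (p - 1) * ((1 - x) * Kd x - p * K x) < 0 := by
        have h3 : p * K x ≥ 1 := by
          have := mul_le_mul_of_nonneg_left hKge' hp.le
          calc (1:ℝ) = p * (1/p) := by field_simp
            _ ≤ p * K x := this
        have h4 : (1 - x) * Kd x ≤ 1/2 := by rw [h1]; linarith
        have h5 : (0:ℝ) < (1 - x) ^ (p - 1) := Real.rpow_pos_of_pos (by nlinarith [hxI.2]) _
        exact mul_neg_of_pos_of_neg h5 (by linarith)
      obtain ⟨y, hyI, hxy, hlt⟩ := exists_slope_neg hxI (hasDerivAt_h p hxI) hneg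
      have h := hM hxI hyI hxy
      dsimp only at h
      linarith
    · -- p ≤ 0 → StrictMonoOn
      intro hp
      apply strictMonoOn_of_deriv_pos (convex_Ioo 0 1)
      · intro x hx
        exact (hasDerivAt_h p hx).continuousAt.continuousWithinAt
      · intro x hx
        rw [interior_Ioo] at hx
        rw [(hasDerivAt_h p hx).deriv]
        have h2 := K_pos hx.2
        have h3 : (0:ℝ) < (1 - x) ^ (p - 1) := Real.rpow_pos_of_pos (by linarith [hx.2]) _
        have h5 := Kd_pos hx.2
        have h4 : 0 < (1 - x) * Kd x - p * K x := by
          have : p * K x ≤ 0 := mul_nonpos_of_nonpos_of_nonneg hp h2.le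
          nlinarith [hx.2, hx.1]
        exact mul_pos h3 h4
end
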